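/- For p a prime greater than 3, the single-qudit operator S = Σ_{B∈Z_p} |ψ_B^{-B(B+2^{-1})}⟩⟨ψ_B^{-B(B+2^{-1})}| is diagonalized by the orthonormal basis of magic states {|f_{-12^{-1}, -8^{-1}, c}⟩ : c ∈ Z_p}; that is, ⟨f_{-12^{-1},-8^{-1},c}| S |f_{-12^{-1},-8^{-1},c'}⟩ = 0 whenever c ≠ c'. -/

import Mathlib

open Complex Matrix BigOperators Finset
open scoped Kronecker

noncomputable section

/-- Additive character `a ↦ exp(2πi a/p)` on `ZMod p`. -/
def chi (p : ℕ) (a : ZMod p) : ℂ := Complex.exp (2 * Real.pi * Complex.I * (a.val : ℂ) / p)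

/-- The shift operator `X : |j⟩ ↦ |j+1⟩`. -/
def Xop (p : ℕ) : Matrix (ZMod p) (ZMod p) ℂ := fun j k => if j = k + 1 then 1 else 0

/-- The clock operator `Z : |j⟩ ↦ ω^j |j⟩`. -/
def Zop (p : ℕ) : Matrix (ZMod p) (ZMod p) ℂ := Matrix.diagonal (fun j => chi p j)

/-- Weyl-Heisenberg displacement operator `D_(x|z) = ω^{2⁻¹ x z} X^x Z^z`. -/
def Dop (p : ℕ) [NeZero p] (x z : ZMod p) : Matrix (ZMod p) (ZMod p) ℂ :=
  chi p ((2 : ZMod p)⁻¹ * x * z) • (Xop p ^ x.val * Zop p ^ z.val)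

/-- The stabilizer MUB vector `|ψ_B^V⟩ = p^{-1/2} Σ_k ω^{2⁻¹ B k² - V k} |k⟩`. -/
def psi (p : ℕ) (B V : ZMod p) : ZMod p → ℂ :=
  fun k => ((Real.sqrt p : ℂ))⁻¹ * chi p ((2 : ZMod p)⁻¹ * B * k ^ 2 - V * k)

/-- The magic state `|f_{a,b,c}⟩ = p^{-1/2} Σ_k ω^{a k³ + b k² + c k} |k⟩`. -/
def magic (p : ℕ) (a b c : ZMod p) : ZMod p → ℂ :=
  fun k => ((Real.sqrt p : ℂ))⁻¹ * chi p (a * k ^ 3 + b * k ^ 2 + c * k)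

/-- Rank-one projector `|v⟩⟨v|`. -/
def proj (p : ℕ) (v : ZMod p → ℂ) : Matrix (ZMod p) (ZMod p) ℂ :=
  fun i j => v i * (starRingEnd ℂ) (v j)

/-- The single-qudit operator `S = Σ_B |ψ_B^{-B(B+2⁻¹)}⟩⟨ψ_B^{-B(B+2⁻¹)}|`. -/
def Sop (p : ℕ) [NeZero p] : Matrix (ZMod p) (ZMod p) ℂ :=
  ∑ B : ZMod p, proj p (psi p B (-B * (B + (2 : ZMod p)⁻¹)))

/-! ### Auxiliary lemmas about the character `chi` -/

lemma chi_eq_pow (p : ℕ) (a : ZMod p) :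
    chi p a = Complex.exp (2 * Real.pi * Complex.I / p) ^ a.val := by
  rw [← Complex.exp_nat_mul, chi]
  ring_nf

lemma chi_add (p : ℕ) [NeZero p] (a b : ZMod p) : chi p (a + b) = chi p a * chi p b := by
  have hζ : Complex.exp (2 * Real.pi * Complex.I / p) ^ p = 1 :=
    (Complex.isPrimitiveRoot_exp p (NeZero.ne p)).pow_eq_one
  rw [chi_eq_pow, chi_eq_pow, chi_eq_pow, ← pow_add, ZMod.val_add]
  conv_rhs => rw [← Nat.div_add_mod (a.val + b.val) p, pow_add, pow_mul, hζ, one_pow, one_mul]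

lemma chi_zero (p : ℕ) [NeZero p] : chi p 0 = 1 := by
  simp [chi]

lemma chi_neg (p : ℕ) [NeZero p] (a : ZMod p) : chi p (-a) = (chi p a)⁻¹ := by
  refine eq_inv_of_mul_eq_one_left ?_
  rw [← chi_add, neg_add_cancel, chi_zero]

lemma chi_conj (p : ℕ) [NeZero p] (a : ZMod p) : (starRingEnd ℂ) (chi p a) = chi p (-a) := by
  rw [chi_neg, chi, ← Complex.exp_conj, ← Complex.exp_neg]
  congr 1
  simp only [_root_.map_neg, map_div₀, _root_.map_mul, Complex.conj_I, Complex.conj_natCast,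
    _root_.map_ofNat, Complex.conj_ofReal]
  ring

lemma chi_sum_eq_zero (p : ℕ) [Fact p.Prime] {t : ZMod p} (ht : t ≠ 0) :
    ∑ B : ZMod p, chi p (t * B) = 0 := by
  have h1 : ∑ B : ZMod p, chi p (t * B) = ∑ B : ZMod p, chi p B :=
    Fintype.sum_bijective (fun B => t * B)
      (mulLeft_bijective₀ t ht) _ _ (fun x => rfl)
  have hp1 : 1 < p := (Fact.out : p.Prime).one_lt
  have h2 : ∑ B : ZMod p, chi p B
      = ∑ i ∈ Finset.range p, Complex.exp (2 * Real.pi * Complex.I / p) ^ i := by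
    refine Finset.sum_nbij' (fun B => B.val) (fun i => (i : ZMod p)) ?_ ?_ ?_ ?_ ?_
    · intro B _; exact Finset.mem_range.2 B.val_lt
    · intro i _; exact Finset.mem_univ _
    · intro B _; exact ZMod.natCast_zmod_val B
    · intro i hi; exact ZMod.val_natCast_of_lt (Finset.mem_range.1 hi)
    · intro B _; exact chi_eq_pow p B
  rw [h1, h2]
  exact (Complex.isPrimitiveRoot_exp p (by omega)).geom_sum_eq_zero hp1

lemma sqrt_inv_mul_self (p : ℕ) :
    ((Real.sqrt p : ℂ))⁻¹ * ((Real.sqrt p : ℂ))⁻¹ = ((p : ℕ) : ℂ)⁻¹ := by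
  rw [← mul_inv]
  congr 1
  rw [← Complex.ofReal_mul, Real.mul_self_sqrt (Nat.cast_nonneg p)]
  norm_cast

/-! ### Auxiliary data for the diagonalization -/

lemma zmod_two_ne_zero_aux (p : ℕ) [Fact p.Prime] (hp3 : 3 < p) : (2 : ZMod p) ≠ 0 := by
  intro h
  rw [show (2 : ZMod p) = ((2 : ℕ) : ZMod p) from by norm_cast,
    ZMod.natCast_eq_zero_iff] at h
  have := Nat.le_of_dvd (by norm_num) h
  omega

lemma zmod_three_ne_zero_aux (p : ℕ) [Fact p.Prime] (hp3 : 3 < p) : (3 : ZMod p) ≠ 0 := by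
  intro h
  rw [show (3 : ZMod p) = ((3 : ℕ) : ZMod p) from by norm_cast,
    ZMod.natCast_eq_zero_iff] at h
  have := Nat.le_of_dvd (by norm_num) h
  omega

/-- The shift used in completing the cube. -/
def sfun (p : ℕ) (B : ZMod p) : ZMod p := -2 * B - (2 : ZMod p)⁻¹

/-- The base exponent phase. -/
def Efun (p : ℕ) (B c0 : ZMod p) : ZMod p :=
  -(12 : ZMod p)⁻¹ * (sfun p B) ^ 3 + (-(8 : ZMod p)⁻¹ - (2 : ZMod p)⁻¹ * B) * (sfun p B) ^ 2
    + (c0 + -B * (B + (2 : ZMod p)⁻¹)) * (sfun p B)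

/-- The reduced cubic Gauss-type sum. -/
def Gfun (p : ℕ) [NeZero p] (c0 : ZMod p) : ℂ :=
  ∑ k : ZMod p, chi p (-(12 : ZMod p)⁻¹ * k ^ 3 + (c0 + (16 : ZMod p)⁻¹) * k)

lemma Tshift (p : ℕ) [Fact p.Prime] (hp3 : 3 < p) (B c0 : ZMod p) :
    ∑ k : ZMod p, chi p (-(12 : ZMod p)⁻¹ * k ^ 3
        + (-(8 : ZMod p)⁻¹ - (2 : ZMod p)⁻¹ * B) * k ^ 2
        + (c0 + -B * (B + (2 : ZMod p)⁻¹)) * k)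
      = chi p (Efun p B c0) * Gfun p c0 := by
  have h2 : (2 : ZMod p) ≠ 0 := zmod_two_ne_zero_aux p hp3
  have h3 : (3 : ZMod p) ≠ 0 := zmod_three_ne_zero_aux p hp3
  have h8 : (8 : ZMod p) ≠ 0 := by
    have h : (8 : ZMod p) = 2 * 2 * 2 := by norm_num
    rw [h]; exact mul_ne_zero (mul_ne_zero h2 h2) h2
  have h12 : (12 : ZMod p) ≠ 0 := by
    have h : (12 : ZMod p) = 2 * 2 * 3 := by norm_num
    rw [h]; exact mul_ne_zero (mul_ne_zero h2 h2) h3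
  have h16 : (16 : ZMod p) ≠ 0 := by
    have h : (16 : ZMod p) = 2 * 2 * 2 * 2 := by norm_num
    rw [h]; exact mul_ne_zero (mul_ne_zero (mul_ne_zero h2 h2) h2) h2
  rw [Gfun, Finset.mul_sum]
  refine Fintype.sum_equiv (Equiv.subRight (sfun p B)) _ _ ?_
  intro x
  rw [← chi_add]
  congr 1
  show _ = _ + (-(12 : ZMod p)⁻¹ * (x - sfun p B) ^ 3 + (c0 + (16 : ZMod p)⁻¹) * (x - sfun p B))
  have h24576 : (24576 : ZMod p) ≠ 0 := by
    have h : (24576 : ZMod p) = 2 ^ 13 * 3 := by norm_num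
    rw [h]; exact mul_ne_zero (pow_ne_zero _ h2) h3
  rw [Efun, sfun]
  field_simp [h24576]
  ring

lemma dot_sum_proj (p : ℕ) [NeZero p] (v w : ZMod p → ℂ) (f : ZMod p → ZMod p → ℂ) :
    star v ⬝ᵥ ((∑ B : ZMod p, proj p (f B)) *ᵥ w)
      = ∑ B : ZMod p, (∑ i : ZMod p, (starRingEnd ℂ) (v i) * f B i)
          * (∑ j : ZMod p, (starRingEnd ℂ) (f B j) * w j) := by
  simp only [mulVec, dotProduct, Matrix.sum_apply, proj, Pi.star_apply, RCLike.star_def,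
    Finset.mul_sum, Finset.sum_mul]
  refine Eq.trans (Finset.sum_congr rfl fun i _ => Finset.sum_comm) ?_
  rw [Finset.sum_comm]
  refine Finset.sum_congr rfl fun B _ => ?_
  rw [Finset.sum_comm]
  refine Finset.sum_congr rfl fun i _ => Finset.sum_congr rfl fun j _ => ?_
  ring

theorem stmt8 (p : ℕ) [Fact p.Prime] (hp3 : 3 < p) (c c' : ZMod p) (hcc : c ≠ c') :
    star (magic p (-(12 : ZMod p)⁻¹) (-(8 : ZMod p)⁻¹) c) ⬝ᵥ
        (Sop p *ᵥ magic p (-(12 : ZMod p)⁻¹) (-(8 : ZMod p)⁻¹) c') = 0 := by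
  have h2 : (2 : ZMod p) ≠ 0 := zmod_two_ne_zero_aux p hp3
  set aa : ZMod p := -(12 : ZMod p)⁻¹ with haa
  set bb : ZMod p := -(8 : ZMod p)⁻¹ with hbb
  rw [Sop, dot_sum_proj]
  have inner1 : ∀ (B c0 : ZMod p),
      (∑ i : ZMod p, (starRingEnd ℂ) (magic p aa bb c0 i)
        * psi p B (-B * (B + (2 : ZMod p)⁻¹)) i)
      = (p : ℂ)⁻¹ * (starRingEnd ℂ) (chi p (Efun p B c0) * Gfun p c0) := by
    intro B c0
    rw [← Tshift p hp3 B c0, map_sum, Finset.mul_sum]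
    refine Finset.sum_congr rfl fun k _ => ?_
    simp only [magic, psi]
    rw [_root_.map_mul, map_inv₀, Complex.conj_ofReal, mul_mul_mul_comm, sqrt_inv_mul_self,
      chi_conj, chi_conj, ← chi_add]
    congr 2
    rw [hbb]
    ring
  have inner2 : ∀ (B c0 : ZMod p),
      (∑ j : ZMod p, (starRingEnd ℂ) (psi p B (-B * (B + (2 : ZMod p)⁻¹)) j)
        * magic p aa bb c0 j)
      = (p : ℂ)⁻¹ * (chi p (Efun p B c0) * Gfun p c0) := by
    intro B c0
    rw [← Tshift p hp3 B c0, Finset.mul_sum]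
    refine Finset.sum_congr rfl fun k _ => ?_
    simp only [magic, psi]
    rw [_root_.map_mul, map_inv₀, Complex.conj_ofReal, mul_mul_mul_comm, sqrt_inv_mul_self,
      chi_conj, ← chi_add]
    congr 2
    rw [hbb]
    ring
  have ht : (-2 * (c' - c) : ZMod p) ≠ 0 :=
    mul_ne_zero (neg_ne_zero.2 h2) (sub_ne_zero_of_ne (Ne.symm hcc))
  have hBterm : ∀ B : ZMod p,
      (∑ i : ZMod p, (starRingEnd ℂ) (magic p aa bb c i)
        * psi p B (-B * (B + (2 : ZMod p)⁻¹)) i)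
      * (∑ j : ZMod p, (starRingEnd ℂ) (psi p B (-B * (B + (2 : ZMod p)⁻¹)) j)
        * magic p aa bb c' j)
      = ((p : ℂ)⁻¹ * (p : ℂ)⁻¹ * ((starRingEnd ℂ) (Gfun p c) * Gfun p c')
          * chi p ((c' - c) * (-(2 : ZMod p)⁻¹))) * chi p (-2 * (c' - c) * B) := by
    intro B
    rw [inner1 B c, inner2 B c', _root_.map_mul, chi_conj]
    have hE : chi p (-Efun p B c) * chi p (Efun p B c')
        = chi p ((c' - c) * (-(2 : ZMod p)⁻¹)) * chi p (-2 * (c' - c) * B) := by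
      rw [← chi_add, ← chi_add]
      congr 1
      rw [Efun, Efun, sfun]
      ring
    calc ((p : ℂ)⁻¹ * (chi p (-Efun p B c) * (starRingEnd ℂ) (Gfun p c)))
          * ((p : ℂ)⁻¹ * (chi p (Efun p B c') * Gfun p c'))
        = ((p : ℂ)⁻¹ * (p : ℂ)⁻¹ * ((starRingEnd ℂ) (Gfun p c) * Gfun p c'))
            * (chi p (-Efun p B c) * chi p (Efun p B c')) := by ring
      _ = _ := by rw [hE]; ring
  rw [Finset.sum_congr rfl fun B _ => hBterm B, ← Finset.mul_sum,
    chi_sum_eq_zero p ht, mul_zero]
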